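/- Suppose Ω is compact and the market (f, S) is arbitrage-free, and let H : Ω → ℝ be a continuous nonnegative claim. Then strong duality holds between superhedging and martingale pricing: inf{ π·f : π ∈ ℝ^{D+1} is a superhedge for H } = sup{ ∫ H dμ : μ is a martingale measure for (f, S) }. -/

import Mathlib

open MeasureTheory Filter Topology

variable {Ω : Type*}

section Defs

variable [TopologicalSpace Ω] [MeasurableSpace Ω]

/-- A portfolio `π` is an arbitrage for the market `(f, S)`:
nonpositive cost, nonnegative payoff everywhere, strictly positive payoff somewhere. -/
def IsArbitrage {D : ℕ} (f : Fin (D + 1) → ℝ) (S : Fin (D + 1) → C(Ω, ℝ))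
    (π : Fin (D + 1) → ℝ) : Prop :=
  (∑ d, π d * f d) ≤ 0 ∧ (∀ ω : Ω, 0 ≤ ∑ d, π d * S d ω) ∧ (∃ ω : Ω, 0 < ∑ d, π d * S d ω)

/-- The market `(f, S)` is arbitrage-free. -/
def ArbitrageFree {D : ℕ} (f : Fin (D + 1) → ℝ) (S : Fin (D + 1) → C(Ω, ℝ)) : Prop :=
  ¬ ∃ π : Fin (D + 1) → ℝ, IsArbitrage f S π

/-- A measure has full support: every nonempty open set has positive measure. -/
def HasFullSupport (P : Measure Ω) : Prop :=
  ∀ U : Set Ω, IsOpen U → U.Nonempty → 0 < P U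

/-- A martingale measure for the market `(f, S)`: a Borel probability measure under which
every asset payoff is integrable with expectation equal to its time-0 price. -/
def IsMartingaleMeasure {D : ℕ} (f : Fin (D + 1) → ℝ) (S : Fin (D + 1) → C(Ω, ℝ))
    (P : Measure Ω) : Prop :=
  IsProbabilityMeasure P ∧ ∀ d, Integrable (S d) P ∧ (∫ ω, S d ω ∂P) = f d

/-- A portfolio `π` is a superhedge for the claim `H`. -/
def IsSuperhedge {D : ℕ} (S : Fin (D + 1) → C(Ω, ℝ)) (H : C(Ω, ℝ))
    (π : Fin (D + 1) → ℝ) : Prop :=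
  ∀ ω : Ω, H ω ≤ ∑ d, π d * S d ω

/-- A portfolio `π` is a subhedge for the claim `H`. -/
def IsSubhedge {D : ℕ} (S : Fin (D + 1) → C(Ω, ℝ)) (H : C(Ω, ℝ))
    (π : Fin (D + 1) → ℝ) : Prop :=
  ∀ ω : Ω, (∑ d, π d * S d ω) ≤ H ω

end Defs


section AuxHull

theorem isCompact_convexHull_aux {E : Type*} [NormedAddCommGroup E] [NormedSpace ℝ E]
    [FiniteDimensional ℝ E] {s : Set E} (hs : IsCompact s) :
    IsCompact (convexHull ℝ s) := by
  classical
  rcases s.eq_empty_or_nonempty with rfl | ⟨e, he⟩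
  · simpa using isCompact_empty
  set n : ℕ := Module.finrank ℝ E + 1 with hn
  set Φ : (Fin n → ℝ) × (Fin n → E) → E := fun p => ∑ i, p.1 i • p.2 i with hΦ
  have hcont : Continuous Φ := by
    apply continuous_finset_sum
    intro i _
    exact ((continuous_apply i).comp continuous_fst).smul
      ((continuous_apply i).comp continuous_snd)
  have key : convexHull ℝ s = Φ '' (stdSimplex ℝ (Fin n) ×ˢ Set.univ.pi fun _ => s) := by
    apply Set.Subset.antisymm
    · intro x hx
      obtain ⟨ι, hfin, z, w, hzs, hai, hw0, hw1, hcomb⟩ :=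
        eq_pos_convex_span_of_mem_convexHull hx
      have hcard : Fintype.card ι ≤ n := by
        refine le_trans hai.card_le_finrank_succ ?_
        have := Submodule.finrank_le (vectorSpan ℝ (Set.range z))
        omega
      obtain ⟨g⟩ : Nonempty (ι ↪ Fin n) := by
        apply Function.Embedding.nonempty_of_card_le
        simpa using hcard
      set w' : Fin n → ℝ := fun i => ∑ j ∈ Finset.univ.filter (fun j => g j = i), w j with hw'
      set z' : Fin n → E := fun i => if h : ∃ j, g j = i then z h.choose else e with hz'
      have hz'eq : ∀ (i : Fin n) (j : ι), g j = i → z' i = z j := by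
        intro i j hji
        have h : ∃ j', g j' = i := ⟨j, hji⟩
        have hcj : h.choose = j := g.injective (h.choose_spec.trans hji.symm)
        simp only [hz', dif_pos h, hcj]
      refine ⟨(w', z'), ⟨?_, ?_⟩, ?_⟩
      · constructor
        · intro i
          exact Finset.sum_nonneg fun j _ => (hw0 j).le
        · rw [show ∑ i, w' i = ∑ i, ∑ j ∈ Finset.univ.filter (fun j => g j = i), w j from rfl]
          rw [Finset.sum_fiberwise Finset.univ g w]
          exact hw1
      · intro i _
        simp only [hz']
        split
        · exact hzs (Set.mem_range_self _)
        · exact he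
      · show ∑ i, w' i • z' i = x
        calc ∑ i, w' i • z' i
            = ∑ i, ∑ j ∈ Finset.univ.filter (fun j => g j = i), w j • z' i := by
              refine Finset.sum_congr rfl fun i _ => ?_
              rw [hw', Finset.sum_smul]
          _ = ∑ i, ∑ j ∈ Finset.univ.filter (fun j => g j = i), w j • z j := by
              refine Finset.sum_congr rfl fun i _ => Finset.sum_congr rfl fun j hj => ?_
              rw [hz'eq i j (Finset.mem_filter.1 hj).2]
          _ = ∑ j, w j • z j := Finset.sum_fiberwise Finset.univ g _
          _ = x := hcomb
    · rintro x ⟨⟨w, z⟩, ⟨hw, hz⟩, rfl⟩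
      exact (convex_convexHull ℝ s).sum_mem (fun i _ => hw.1 i) hw.2
        (fun i _ => subset_convexHull ℝ s (hz i (Set.mem_univ i)))
  rw [key]
  exact ((isCompact_stdSimplex ℝ (Fin n)).prod (isCompact_univ_pi fun _ => hs)).image hcont

end AuxHull

section AuxMeasure

variable [MetricSpace Ω] [CompactSpace Ω] [MeasurableSpace Ω] [BorelSpace Ω]

theorem cont_integrable (μ : Measure Ω) [IsFiniteMeasure μ] (g : C(Ω, ℝ)) :
    Integrable (fun x => g x) μ :=
  g.continuous.integrable_of_hasCompactSupport (isClosed_tsupport _).isCompact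

theorem discrete_measure {ι : Type} (t : Finset ι) (w : ι → ℝ) (ω : ι → Ω)
    (hw0 : ∀ i ∈ t, 0 ≤ w i) (hw1 : ∑ i ∈ t, w i = 1) :
    IsProbabilityMeasure (∑ i ∈ t, (ENNReal.ofReal (w i)) • Measure.dirac (ω i)) ∧
    ∀ g : C(Ω, ℝ), (∫ x, g x ∂(∑ i ∈ t, (ENNReal.ofReal (w i)) • Measure.dirac (ω i)))
      = ∑ i ∈ t, w i * g (ω i) := by
  have hint : ∀ (g : C(Ω, ℝ)) i, Integrable (fun x => g x)
      ((ENNReal.ofReal (w i)) • Measure.dirac (ω i)) := fun g i =>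
    (cont_integrable _ g).smul_measure ENNReal.ofReal_ne_top
  constructor
  · constructor
    rw [Measure.finset_sum_apply]
    simp only [Measure.smul_apply, smul_eq_mul, measure_univ, mul_one]
    rw [← ENNReal.ofReal_sum_of_nonneg hw0, hw1, ENNReal.ofReal_one]
  · intro g
    rw [integral_finset_sum_measure (fun i _ => hint g i)]
    refine Finset.sum_congr rfl fun i hi => ?_
    rw [integral_smul_measure, integral_dirac, ENNReal.toReal_ofReal (hw0 i hi), smul_eq_mul]

end AuxMeasure

/-- strong duality between superhedging and martingale pricing. -/
theorem superhedging_duality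
    [MetricSpace Ω] [Nonempty Ω] [CompactSpace Ω] [TopologicalSpace.SeparableSpace Ω]
    [CompleteSpace Ω] [MeasurableSpace Ω] [BorelSpace Ω] {D : ℕ} (f : Fin (D + 1) → ℝ) (S : Fin (D + 1) → C(Ω, ℝ))
    (hf : ∀ d, 0 ≤ f d) (hS : ∀ d ω, 0 ≤ S d ω)
    (hS0 : ∀ ω, S 0 ω = 1) (hf0 : f 0 = 1)
    (hNA : ArbitrageFree f S) (H : C(Ω, ℝ)) (hH : ∀ ω, 0 ≤ H ω) :
    sInf {x : ℝ | ∃ π : Fin (D + 1) → ℝ, IsSuperhedge S H π ∧ x = ∑ d, π d * f d} =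
    sSup {x : ℝ | ∃ μ : Measure Ω, IsMartingaleMeasure f S μ ∧ x = ∫ ω, H ω ∂μ} := by
  classical
  set 𝒞 : Set ℝ := {x : ℝ | ∃ π : Fin (D + 1) → ℝ, IsSuperhedge S H π ∧ x = ∑ d, π d * f d}
    with h𝒞
  set 𝒯 : Set ℝ := {x : ℝ | ∃ μ : Measure Ω, IsMartingaleMeasure f S μ ∧ x = ∫ ω, H ω ∂μ}
    with h𝒯
  set G : Ω → (Fin (D + 1) → ℝ) :=
    fun x => (fun j => Fin.cases (H x) (fun d => S d.succ x) j) with hG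
  have hGcont : Continuous G := by
    apply continuous_pi
    intro j
    induction j using Fin.cases with
    | zero => simpa [hG] using H.continuous
    | succ d => simpa [hG] using (S d.succ).continuous
  set K : Set (Fin (D + 1) → ℝ) := convexHull ℝ (Set.range G) with hK
  have hKcomp : IsCompact K := isCompact_convexHull_aux (isCompact_range hGcont)
  have hKconv : Convex ℝ K := convex_convexHull ℝ _
  set upd : ℝ → (Fin (D + 1) → ℝ) :=
    fun y => (fun j => Fin.cases y (fun d => f d.succ) j) with hupd
  -- martingale measures from fiber points
  have mmOf : ∀ y : ℝ, upd y ∈ K →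
      ∃ μ : Measure Ω, IsMartingaleMeasure f S μ ∧ (∫ x, H x ∂μ) = y := by
    intro y hy
    rw [hK, convexHull_eq] at hy
    obtain ⟨ι, t, w, z, hw0, hw1, hzr, hcm⟩ := hy
    have hωex : ∀ i, ∃ x : Ω, i ∈ t → G x = z i := by
      intro i
      by_cases hi : i ∈ t
      · obtain ⟨x, hx⟩ := hzr i hi
        exact ⟨x, fun _ => hx⟩
      · exact ⟨Classical.arbitrary Ω, fun h => absurd h hi⟩
    choose ω hω using hωex
    have hsum : ∑ i ∈ t, w i • G (ω i) = upd y := by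
      rw [← hcm, Finset.centerMass_eq_of_sum_1 _ _ hw1]
      exact Finset.sum_congr rfl fun i hi => by rw [hω i hi]
    have hcoord : ∀ g : C(Ω, ℝ), ∀ j : Fin (D + 1), (∀ i ∈ t, g (ω i) = G (ω i) j) →
        ∑ i ∈ t, w i * g (ω i) = upd y j := by
      intro g j hgj
      have := congrFun hsum j
      rw [Finset.sum_apply] at this
      rw [← this]
      exact Finset.sum_congr rfl fun i hi => by rw [hgj i hi, Pi.smul_apply, smul_eq_mul]
    obtain ⟨hprob, hintg⟩ := discrete_measure t w ω hw0 hw1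
    refine ⟨∑ i ∈ t, (ENNReal.ofReal (w i)) • Measure.dirac (ω i), ⟨hprob, ?_⟩, ?_⟩
    · intro d
      haveI := hprob
      refine ⟨cont_integrable _ (S d), ?_⟩
      rw [hintg (S d)]
      induction d using Fin.cases with
      | zero =>
        rw [hf0]
        simpa only [hS0, mul_one] using hw1
      | succ e =>
        have := hcoord (S e.succ) e.succ (fun i _ => by simp [hG])
        rw [this]
        simp [hupd]
    · rw [hintg H]
      have := hcoord H 0 (fun i _ => by simp [hG])
      rw [this]
      simp [hupd]
  -- FTAP : the fiber is nonempty
  have hAK : ∃ p ∈ K, ∀ d : Fin D, p d.succ = f d.succ := by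
    by_contra hcon
    push_neg at hcon
    set A : Set (Fin (D + 1) → ℝ) := {x | ∀ d : Fin D, x d.succ = f d.succ} with hA
    have hAconv : Convex ℝ A := by
      intro x hx y hy a b ha hb hab
      intro d
      simp only [Pi.add_apply, Pi.smul_apply, smul_eq_mul]
      rw [hx d, hy d, ← add_mul, hab, one_mul]
    have hAclosed : IsClosed A := by
      have : A = ⋂ d : Fin D, {x : Fin (D + 1) → ℝ | x d.succ = f d.succ} := by
        ext x; simp [hA, Set.mem_iInter]
      rw [this]
      exact isClosed_iInter fun d => isClosed_eq (continuous_apply _) continuous_const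
    have hdisj : Disjoint K A := by
      rw [Set.disjoint_left]
      intro p hpK hpA
      obtain ⟨d, hd⟩ := hcon p hpK
      exact hd (hpA d)
    obtain ⟨ℓ, u, v, hKu, huv, hAv⟩ :=
      geometric_hahn_banach_compact_closed hKconv hKcomp hAconv hAclosed hdisj
    set b : Fin (D + 1) → ℝ := fun i => ℓ (fun j => if i = j then 1 else 0) with hb
    have hℓ : ∀ x : Fin (D + 1) → ℝ, ℓ x = ∑ j, x j * b j := by
      intro x
      simpa [smul_eq_mul] using LinearMap.pi_apply_eq_sum_univ (ℓ : (Fin (D + 1) → ℝ) →ₗ[ℝ] ℝ) x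
    set r : ℝ := ∑ d : Fin D, f d.succ * b d.succ with hr
    have hupdA : ∀ y : ℝ, upd y ∈ A := fun y d => by simp [hupd]
    have hupdℓ : ∀ y : ℝ, ℓ (upd y) = y * b 0 + r := by
      intro y
      rw [hℓ, Fin.sum_univ_succ]
      simp [hupd, hr]
    have hb0 : b 0 = 0 := by
      by_contra hb0
      have h1 := hAv (upd ((v - r) / b 0)) (hupdA _)
      rw [hupdℓ] at h1
      rw [div_mul_cancel₀ _ hb0] at h1
      linarith
    have hGlt : ∀ x : Ω, ℓ (G x) < u := fun x =>
      hKu (G x) (subset_convexHull ℝ _ ⟨x, rfl⟩)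
    have hGℓ : ∀ x : Ω, ℓ (G x) = ∑ d : Fin D, S d.succ x * b d.succ := by
      intro x
      rw [hℓ, Fin.sum_univ_succ]
      simp [hG, hb0]
    have hrv : v < r := by
      have := hAv (upd 0) (hupdA 0)
      rw [hupdℓ] at this
      simpa [hb0] using this
    set π : Fin (D + 1) → ℝ :=
      fun j => Fin.cases r (fun d => -(b d.succ)) j with hπ
    have hpay : ∀ x : Ω, (∑ d, π d * S d x) = r - ℓ (G x) := by
      intro x
      rw [hGℓ, Fin.sum_univ_succ]
      simp only [hπ, Fin.cases_zero, Fin.cases_succ, hS0 x, mul_one]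
      have : ∑ d : Fin D, -(b d.succ) * S d.succ x
          = -∑ d : Fin D, S d.succ x * b d.succ := by
        rw [← Finset.sum_neg_distrib]
        exact Finset.sum_congr rfl fun d _ => by ring
      rw [this]
      ring
    refine hNA ⟨π, ?_, ?_, ?_⟩
    · rw [Fin.sum_univ_succ]
      simp only [hπ, Fin.cases_zero, Fin.cases_succ, hf0, mul_one]
      have : ∑ d : Fin D, -(b d.succ) * f d.succ = -r := by
        rw [hr, ← Finset.sum_neg_distrib]
        exact Finset.sum_congr rfl fun d _ => by ring
      rw [this]
      linarith
    · intro x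
      rw [hpay x]
      have := hGlt x
      linarith
    · refine ⟨Classical.arbitrary Ω, ?_⟩
      rw [hpay _]
      have := hGlt (Classical.arbitrary Ω)
      linarith
  -- the fiber and its supremum
  set F : Set ℝ := {y : ℝ | upd y ∈ K} with hF
  have hupdcont : Continuous upd := by
    apply continuous_pi
    intro j
    induction j using Fin.cases with
    | zero => simpa [hupd] using continuous_id'
    | succ d => simpa [hupd] using continuous_const
  have hFclosed : IsClosed F := hKcomp.isClosed.preimage hupdcont
  have hFne : F.Nonempty := by
    obtain ⟨p, hpK, hpA⟩ := hAK
    refine ⟨p 0, ?_⟩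
    have hup : upd (p 0) = p := by
      funext j
      induction j using Fin.cases with
      | zero => simp [hupd]
      | succ d => simp [hupd, hpA d]
    show upd (p 0) ∈ K
    rw [hup]
    exact hpK
  have hFcomp : IsCompact F := by
    refine IsCompact.of_isClosed_subset (hKcomp.image (continuous_apply 0)) hFclosed ?_
    intro y hy
    exact ⟨upd y, hy, by simp [hupd]⟩
  set β : ℝ := sSup F with hβ
  have hβF : β ∈ F := hFcomp.sSup_mem hFne
  obtain ⟨μβ, hμβ, hβint⟩ := mmOf β hβF
  have hβT : β ∈ 𝒯 := ⟨μβ, hμβ, hβint.symm⟩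
  -- superhedge existence (C nonempty)
  obtain ⟨xm, -, hxm⟩ := isCompact_univ.exists_isMaxOn Set.univ_nonempty
    H.continuous.continuousOn
  set π₀ : Fin (D + 1) → ℝ := fun j => Fin.cases (H xm) (fun _ => 0) j with hπ₀
  have hπ₀super : IsSuperhedge S H π₀ := by
    intro x
    rw [Fin.sum_univ_succ]
    simpa [hπ₀, hS0 x] using hxm (Set.mem_univ x)
  set c₀ : ℝ := ∑ d, π₀ d * f d with hc₀
  have hc₀C : c₀ ∈ 𝒞 := ⟨π₀, hπ₀super, rfl⟩
  -- weak duality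
  have hweak : ∀ x ∈ 𝒯, ∀ c ∈ 𝒞, x ≤ c := by
    rintro x ⟨μ, ⟨hμp, hμi⟩, rfl⟩ c ⟨π, hπs, rfl⟩
    haveI := hμp
    calc ∫ x, H x ∂μ ≤ ∫ x, (∑ d, π d * S d x) ∂μ := by
          refine integral_mono (cont_integrable μ H) ?_ hπs
          exact integrable_finset_sum _ fun d _ => ((hμi d).1.const_mul (π d))
      _ = ∑ d, π d * f d := by
          rw [integral_finset_sum _ fun d _ => ((hμi d).1.const_mul (π d))]
          exact Finset.sum_congr rfl fun d _ => by
            rw [integral_const_mul, (hμi d).2]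
  have hTbdd : BddAbove 𝒯 := ⟨c₀, fun x hx => hweak x hx c₀ hc₀C⟩
  have hCbdd : BddBelow 𝒞 := ⟨β, fun c hc => hweak β hβT c hc⟩
  -- near-optimal superhedges
  have heps : ∀ ε : ℝ, 0 < ε → ∃ c ∈ 𝒞, c ≤ β + ε := by
    intro ε hε
    have hpnot : upd (β + ε) ∉ K := by
      intro hmem
      have : β + ε ≤ β := le_csSup hFcomp.bddAbove hmem
      linarith
    obtain ⟨ℓ, u, hKu, hup⟩ :=
      geometric_hahn_banach_closed_point hKconv hKcomp.isClosed hpnot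
    set b : Fin (D + 1) → ℝ := fun i => ℓ (fun j => if i = j then 1 else 0) with hb
    have hℓ : ∀ x : Fin (D + 1) → ℝ, ℓ x = ∑ j, x j * b j := by
      intro x
      simpa [smul_eq_mul] using LinearMap.pi_apply_eq_sum_univ (ℓ : (Fin (D + 1) → ℝ) →ₗ[ℝ] ℝ) x
    set r : ℝ := ∑ d : Fin D, f d.succ * b d.succ with hr
    have hupdℓ : ∀ y : ℝ, ℓ (upd y) = y * b 0 + r := by
      intro y
      rw [hℓ, Fin.sum_univ_succ]
      simp [hupd, hr]
    have hβu : β * b 0 + r < u := by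
      rw [← hupdℓ]
      exact hKu _ hβF
    have huβε : u < (β + ε) * b 0 + r := by
      rw [← hupdℓ]
      exact hup
    have hb0 : 0 < b 0 := by nlinarith
    have hGℓ : ∀ x : Ω, H x * b 0 + ∑ d : Fin D, S d.succ x * b d.succ = ℓ (G x) := by
      intro x
      rw [hℓ, Fin.sum_univ_succ]
      simp [hG]
    set π : Fin (D + 1) → ℝ :=
      fun j => Fin.cases (u / b 0) (fun d => -(b d.succ) / b 0) j with hπ
    have hpay : ∀ x : Ω, (∑ d, π d * S d x)
        = (u - ∑ d : Fin D, S d.succ x * b d.succ) / b 0 := by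
      intro x
      rw [Fin.sum_univ_succ]
      simp only [hπ, Fin.cases_zero, Fin.cases_succ, hS0 x, mul_one]
      have : ∑ d : Fin D, -(b d.succ) / b 0 * S d.succ x
          = -(∑ d : Fin D, S d.succ x * b d.succ) / b 0 := by
        rw [Finset.sum_congr rfl fun d (_ : d ∈ Finset.univ) =>
          (by ring : -b d.succ / b 0 * S d.succ x = -(S d.succ x * b d.succ) / b 0),
          ← Finset.sum_div, Finset.sum_neg_distrib]
      rw [this]
      ring
    have hπsuper : IsSuperhedge S H π := by
      intro x
      rw [hpay x]
      have h1 : ℓ (G x) < u := hKu (G x) (subset_convexHull ℝ _ ⟨x, rfl⟩)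
      rw [← hGℓ x] at h1
      rw [le_div_iff₀ hb0]
      nlinarith
    refine ⟨∑ d, π d * f d, ⟨π, hπsuper, rfl⟩, ?_⟩
    have hcost : (∑ d, π d * f d) = (u - r) / b 0 := by
      rw [Fin.sum_univ_succ]
      simp only [hπ, Fin.cases_zero, Fin.cases_succ, hf0, mul_one]
      have : ∑ d : Fin D, -(b d.succ) / b 0 * f d.succ
          = -(∑ d : Fin D, f d.succ * b d.succ) / b 0 := by
        rw [Finset.sum_congr rfl fun d (_ : d ∈ Finset.univ) =>
          (by ring : -b d.succ / b 0 * f d.succ = -(f d.succ * b d.succ) / b 0),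
          ← Finset.sum_div, Finset.sum_neg_distrib]
      rw [this, ← hr]
      ring
    rw [hcost, div_le_iff₀ hb0]
    nlinarith
  -- conclusion
  apply le_antisymm
  · have h1 : β ≤ sSup 𝒯 := le_csSup hTbdd hβT
    have h2 : sInf 𝒞 ≤ β := by
      by_contra hlt
      push_neg at hlt
      obtain ⟨c, hcC, hcle⟩ := heps ((sInf 𝒞 - β) / 2) (by linarith)
      have := csInf_le hCbdd hcC
      linarith
    linarith
  · exact csSup_le ⟨β, hβT⟩ fun x hx => le_csInf ⟨c₀, hc₀C⟩ fun c hc => hweak x hx c hc
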